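/- Let γ(s,t) be an arclength-parametrized inextensible flow of pseudo null curves in E⁴₁ with pseudo null Frenet frame {T, N, B₁, B₂}, curvatures k₁ = 1, k₂, k₃, flow ∂γ/∂t = α₁T + α₂N + α₃B₁ + α₄B₂ (so ∂α₁/∂s = α₄), and ψ₁ = ⟨∂N/∂t, B₁⟩. Then ∂²α₃/∂s² + ∂(α₂k₂)/∂s − ∂(α₄k₃)/∂s − (∂α₄/∂s)k₃ + (∂α₂/∂s)k₂ + α₁k₂ + 2α₃k₂k₃ − ψ₁ = 0. -/

import Mathlib

/-!
Formalization of inextensible flows of partially null / pseudo null curves in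
Minkowski space-time `E⁴₁` (ℝ⁴ with signature (-,+,+,+)).
-/

noncomputable section

/-- The Minkowski bilinear form on `ℝ⁴` with signature `(-,+,+,+)`. -/
def mink (v w : Fin 4 → ℝ) : ℝ :=
  -(v 0 * w 0) + v 1 * w 1 + v 2 * w 2 + v 3 * w 3

/-- The Minkowski norm `‖v‖ = √|⟨v,v⟩|`. -/
def mnorm (v : Fin 4 → ℝ) : ℝ := Real.sqrt |mink v v|

section Helpers

variable {E : Type*} [NormedAddCommGroup E] [NormedSpace ℝ E]

lemma pd1_hasDerivAt {f : ℝ → ℝ → E} (hf : ContDiff ℝ (⊤:ℕ∞) (fun p : ℝ × ℝ => f p.1 p.2))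
    (s t : ℝ) :
    HasDerivAt (fun y => f y t) (fderiv ℝ (fun p : ℝ × ℝ => f p.1 p.2) (s, t) (1, 0)) s := by
  have h1 : HasFDerivAt (fun y : ℝ => (y, t)) (ContinuousLinearMap.inl ℝ ℝ ℝ) s :=
    (hasFDerivAt_id s).prodMk (hasFDerivAt_const t s)
  have h2 := ((hf.differentiable (by norm_cast) (s, t)).hasFDerivAt).comp s h1
  have := h2.hasDerivAt
  simpa [Function.comp_def] using this

lemma pd2_hasDerivAt {f : ℝ → ℝ → E} (hf : ContDiff ℝ (⊤:ℕ∞) (fun p : ℝ × ℝ => f p.1 p.2))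
    (s t : ℝ) :
    HasDerivAt (fun x => f s x) (fderiv ℝ (fun p : ℝ × ℝ => f p.1 p.2) (s, t) (0, 1)) t := by
  have h1 : HasFDerivAt (fun x : ℝ => (s, x)) (ContinuousLinearMap.inr ℝ ℝ ℝ) t :=
    (hasFDerivAt_const s t).prodMk (hasFDerivAt_id t)
  have h2 := ((hf.differentiable (by norm_cast) (s, t)).hasFDerivAt).comp t h1
  have := h2.hasDerivAt
  simpa [Function.comp_def] using this

lemma pd1_eq {f : ℝ → ℝ → E} (hf : ContDiff ℝ (⊤:ℕ∞) (fun p : ℝ × ℝ => f p.1 p.2)) (s t : ℝ) :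
    deriv (fun y => f y t) s = fderiv ℝ (fun p : ℝ × ℝ => f p.1 p.2) (s, t) (1, 0) :=
  (pd1_hasDerivAt hf s t).deriv

lemma pd2_eq {f : ℝ → ℝ → E} (hf : ContDiff ℝ (⊤:ℕ∞) (fun p : ℝ × ℝ => f p.1 p.2)) (s t : ℝ) :
    deriv (fun x => f s x) t = fderiv ℝ (fun p : ℝ × ℝ => f p.1 p.2) (s, t) (0, 1) :=
  (pd2_hasDerivAt hf s t).deriv

/-- smoothness of the first partial derivative as a 2-variable function -/
lemma pd1_contDiff {f : ℝ → ℝ → E} (hf : ContDiff ℝ (⊤:ℕ∞) (fun p : ℝ × ℝ => f p.1 p.2)) :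
    ContDiff ℝ (⊤:ℕ∞) (fun p : ℝ × ℝ => deriv (fun y => f y p.2) p.1) := by
  have : (fun p : ℝ × ℝ => deriv (fun y => f y p.2) p.1) =
      fun p : ℝ × ℝ => fderiv ℝ (fun q : ℝ × ℝ => f q.1 q.2) p (1, 0) := by
    funext p; exact pd1_eq hf p.1 p.2
  rw [this]
  exact (hf.fderiv_right (by simp)).clm_apply contDiff_const

/-- Clairaut / Schwarz: the two partial derivatives commute -/
lemma pd_swap {f : ℝ → ℝ → E} (hf : ContDiff ℝ (⊤:ℕ∞) (fun p : ℝ × ℝ => f p.1 p.2))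
    (s t : ℝ) :
    deriv (fun x => deriv (fun y => f y x) s) t = deriv (fun y => deriv (fun x => f y x) t) s := by
  set F := fun p : ℝ × ℝ => f p.1 p.2 with hF
  have hsymm : IsSymmSndFDerivAt ℝ F (s, t) :=
    hf.contDiffAt.isSymmSndFDerivAt (by rw [minSmoothness_of_isRCLikeNormedField]; exact WithTop.coe_le_coe.mpr (le_top : (2:ℕ∞) ≤ ⊤))
  have hL : deriv (fun x => deriv (fun y => f y x) s) t
      = fderiv ℝ (fderiv ℝ F) (s, t) (0, 1) (1, 0) := by
    have e1 : (fun x => deriv (fun y => f y x) s) = fun x => fderiv ℝ F (s, x) (1, 0) := by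
      funext x; exact pd1_eq hf s x
    rw [e1]
    have hdF : DifferentiableAt ℝ (fderiv ℝ F) (s, t) :=
      ((hf.fderiv_right (m := (⊤:ℕ∞)) (by simp)).differentiable (by norm_cast)) (s, t)
    have h1 : HasFDerivAt (fun x : ℝ => (s, x)) (ContinuousLinearMap.inr ℝ ℝ ℝ) t :=
      (hasFDerivAt_const s t).prodMk (hasFDerivAt_id t)
    have h2 : HasFDerivAt (fun x : ℝ => fderiv ℝ F (s, x))
        ((fderiv ℝ (fderiv ℝ F) (s, t)).comp (ContinuousLinearMap.inr ℝ ℝ ℝ)) t :=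
      (hdF.hasFDerivAt).comp t h1
    have h3 : HasDerivAt (fun x : ℝ => fderiv ℝ F (s, x) (1, 0))
        (fderiv ℝ (fderiv ℝ F) (s, t) (0, 1) (1, 0)) t := by
      have := (h2.hasDerivAt).clm_apply (hasDerivAt_const t ((1:ℝ), (0:ℝ)))
      simpa using this
    exact h3.deriv
  have hR : deriv (fun y => deriv (fun x => f y x) t) s
      = fderiv ℝ (fderiv ℝ F) (s, t) (1, 0) (0, 1) := by
    have e1 : (fun y => deriv (fun x => f y x) t) = fun y => fderiv ℝ F (y, t) (0, 1) := by
      funext y; exact pd2_eq hf y t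
    rw [e1]
    have hdF : DifferentiableAt ℝ (fderiv ℝ F) (s, t) :=
      ((hf.fderiv_right (m := (⊤:ℕ∞)) (by simp)).differentiable (by norm_cast)) (s, t)
    have h1 : HasFDerivAt (fun y : ℝ => (y, t)) (ContinuousLinearMap.inl ℝ ℝ ℝ) s :=
      (hasFDerivAt_id s).prodMk (hasFDerivAt_const t s)
    have h2 : HasFDerivAt (fun y : ℝ => fderiv ℝ F (y, t))
        ((fderiv ℝ (fderiv ℝ F) (s, t)).comp (ContinuousLinearMap.inl ℝ ℝ ℝ)) s :=
      (hdF.hasFDerivAt).comp s h1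
    have h3 : HasDerivAt (fun y : ℝ => fderiv ℝ F (y, t) (0, 1))
        (fderiv ℝ (fderiv ℝ F) (s, t) (1, 0) (0, 1)) s := by
      have := (h2.hasDerivAt).clm_apply (hasDerivAt_const s ((0:ℝ), (1:ℝ)))
      simpa using this
    exact h3.deriv
  rw [hL, hR, hsymm (0, 1) (1, 0)]

end Helpers

lemma mink_add_left (u v w : Fin 4 → ℝ) : mink (u + v) w = mink u w + mink v w := by
  simp only [mink, Pi.add_apply]; ring

lemma mink_sub_left (u v w : Fin 4 → ℝ) : mink (u - v) w = mink u w - mink v w := by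
  simp only [mink, Pi.sub_apply]; ring

lemma mink_smul_left (a : ℝ) (u w : Fin 4 → ℝ) : mink (a • u) w = a * mink u w := by
  simp only [mink, Pi.smul_apply, smul_eq_mul]; ring

lemma mink_neg_left (u w : Fin 4 → ℝ) : mink (-u) w = -mink u w := by
  simp only [mink, Pi.neg_apply]; ring

lemma mink_comm (u w : Fin 4 → ℝ) : mink u w = mink w u := by
  simp only [mink]; ring

theorem pde_B1_component_pseudo_null
    (γ T N B₁ B₂ : ℝ → ℝ → (Fin 4 → ℝ))
    (k₁ k₂ k₃ α₁ α₂ α₃ α₄ : ℝ → ℝ → ℝ)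
    (ψ₁ : ℝ → ℝ → ℝ)
    (hγsmooth : ContDiff ℝ (⊤ : ℕ∞) (fun p : ℝ × ℝ => γ p.1 p.2))
    (hTsmooth : ContDiff ℝ (⊤ : ℕ∞) (fun p : ℝ × ℝ => T p.1 p.2))
    (hNsmooth : ContDiff ℝ (⊤ : ℕ∞) (fun p : ℝ × ℝ => N p.1 p.2))
    (hB₁smooth : ContDiff ℝ (⊤ : ℕ∞) (fun p : ℝ × ℝ => B₁ p.1 p.2))
    (hB₂smooth : ContDiff ℝ (⊤ : ℕ∞) (fun p : ℝ × ℝ => B₂ p.1 p.2))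
    (hk₂smooth : ContDiff ℝ (⊤ : ℕ∞) (fun p : ℝ × ℝ => k₂ p.1 p.2))
    (hk₃smooth : ContDiff ℝ (⊤ : ℕ∞) (fun p : ℝ × ℝ => k₃ p.1 p.2))
    (hα₁smooth : ContDiff ℝ (⊤ : ℕ∞) (fun p : ℝ × ℝ => α₁ p.1 p.2))
    (hα₂smooth : ContDiff ℝ (⊤ : ℕ∞) (fun p : ℝ × ℝ => α₂ p.1 p.2))
    (hα₃smooth : ContDiff ℝ (⊤ : ℕ∞) (fun p : ℝ × ℝ => α₃ p.1 p.2))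
    (hα₄smooth : ContDiff ℝ (⊤ : ℕ∞) (fun p : ℝ × ℝ => α₄ p.1 p.2))
    (hTT : ∀ s t : ℝ, mink (T s t) (T s t) = 1)
    (hB₁B₁ : ∀ s t : ℝ, mink (B₁ s t) (B₁ s t) = 1)
    (hNN : ∀ s t : ℝ, mink (N s t) (N s t) = 0)
    (hB₂B₂ : ∀ s t : ℝ, mink (B₂ s t) (B₂ s t) = 0)
    (hNB₂ : ∀ s t : ℝ, mink (N s t) (B₂ s t) = 1)
    (hTN : ∀ s t : ℝ, mink (T s t) (N s t) = 0)
    (hTB₁ : ∀ s t : ℝ, mink (T s t) (B₁ s t) = 0)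
    (hTB₂ : ∀ s t : ℝ, mink (T s t) (B₂ s t) = 0)
    (hNB₁ : ∀ s t : ℝ, mink (N s t) (B₁ s t) = 0)
    (hB₁B₂ : ∀ s t : ℝ, mink (B₁ s t) (B₂ s t) = 0)
    -- arclength parametrization and pseudo null Frenet equations (k₁ = 1)
    (hk₁ : ∀ s t : ℝ, k₁ s t = 1)
    (hT : ∀ s t : ℝ, T s t = deriv (fun x => γ x t) s)
    (hunit : ∀ s t : ℝ, mnorm (deriv (fun x => γ x t) s) = 1)
    (hfr₁ : ∀ s t : ℝ, deriv (fun x => T x t) s = k₁ s t • N s t)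
    (hfr₂ : ∀ s t : ℝ, deriv (fun x => N x t) s = k₂ s t • B₁ s t)
    (hfr₃ : ∀ s t : ℝ, deriv (fun x => B₁ x t) s = k₃ s t • N s t - k₂ s t • B₂ s t)
    (hfr₄ : ∀ s t : ℝ, deriv (fun x => B₂ x t) s = -(k₁ s t) • T s t - k₃ s t • B₁ s t)
    (hflow : ∀ s t : ℝ, deriv (fun x => γ s x) t =
      α₁ s t • T s t + α₂ s t • N s t + α₃ s t • B₁ s t + α₄ s t • B₂ s t)
    -- inextensibility: ∂α₁/∂s = α₄
    (hinext : ∀ s t : ℝ, deriv (fun x => α₁ x t) s = α₄ s t)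
    (hψ₁ : ∀ s t : ℝ, ψ₁ s t = mink (deriv (fun x => N s x) t) (B₁ s t)) :
    ∀ s t : ℝ,
      deriv (fun x => deriv (fun y => α₃ y t) x) s + deriv (fun x => α₂ x t * k₂ x t) s -
      deriv (fun x => α₄ x t * k₃ x t) s - deriv (fun x => α₄ x t) s * k₃ s t +
      deriv (fun x => α₂ x t) s * k₂ s t + α₁ s t * k₂ s t +
      2 * α₃ s t * k₂ s t * k₃ s t - ψ₁ s t = 0 := by
  -- simplified Frenet equations (using k₁ = 1)
  have hfr₁' : ∀ s t : ℝ, deriv (fun x => T x t) s = N s t := by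
    intro s t; rw [hfr₁, hk₁, one_smul]
  have hfr₄' : ∀ s t : ℝ, deriv (fun x => B₂ x t) s = -T s t - k₃ s t • B₁ s t := by
    intro s t; rw [hfr₄, hk₁]; simp
  -- Step A : ∂T/∂t
  have stepA : ∀ y τ : ℝ, deriv (fun x => T y x) τ =
      (α₁ y τ + deriv (fun x => α₂ x τ) y + α₃ y τ * k₃ y τ) • N y τ
      + (α₂ y τ * k₂ y τ + deriv (fun x => α₃ x τ) y - α₄ y τ * k₃ y τ) • B₁ y τ
      + (deriv (fun x => α₄ x τ) y - α₃ y τ * k₂ y τ) • B₂ y τ := by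
    intro y τ
    have e1 : (fun x => T y x) = fun x => deriv (fun z => γ z x) y := by
      funext x; exact hT y x
    have e2 : (fun z => deriv (fun x => γ z x) τ) =
        fun z => α₁ z τ • T z τ + α₂ z τ • N z τ + α₃ z τ • B₁ z τ + α₄ z τ • B₂ z τ := by
      funext z; exact hflow z τ
    rw [e1, pd_swap hγsmooth y τ, e2]
    -- now differentiate the flow combination in the arclength direction
    have hα₁' : HasDerivAt (fun z => α₁ z τ) (α₄ y τ) y := by
      have := (pd1_hasDerivAt hα₁smooth y τ).differentiableAt.hasDerivAt
      rwa [hinext] at this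
    have hα₂' : HasDerivAt (fun z => α₂ z τ) (deriv (fun x => α₂ x τ) y) y :=
      (pd1_hasDerivAt hα₂smooth y τ).differentiableAt.hasDerivAt
    have hα₃' : HasDerivAt (fun z => α₃ z τ) (deriv (fun x => α₃ x τ) y) y :=
      (pd1_hasDerivAt hα₃smooth y τ).differentiableAt.hasDerivAt
    have hα₄' : HasDerivAt (fun z => α₄ z τ) (deriv (fun x => α₄ x τ) y) y :=
      (pd1_hasDerivAt hα₄smooth y τ).differentiableAt.hasDerivAt
    have hT' : HasDerivAt (fun z => T z τ) (N y τ) y := by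
      have := (pd1_hasDerivAt hTsmooth y τ).differentiableAt.hasDerivAt
      rwa [hfr₁'] at this
    have hN' : HasDerivAt (fun z => N z τ) (k₂ y τ • B₁ y τ) y := by
      have := (pd1_hasDerivAt hNsmooth y τ).differentiableAt.hasDerivAt
      rwa [hfr₂] at this
    have hB₁' : HasDerivAt (fun z => B₁ z τ) (k₃ y τ • N y τ - k₂ y τ • B₂ y τ) y := by
      have := (pd1_hasDerivAt hB₁smooth y τ).differentiableAt.hasDerivAt
      rwa [hfr₃] at this
    have hB₂' : HasDerivAt (fun z => B₂ z τ) (-T y τ - k₃ y τ • B₁ y τ) y := by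
      have := (pd1_hasDerivAt hB₂smooth y τ).differentiableAt.hasDerivAt
      rwa [hfr₄'] at this
    have hcomb := (((hα₁'.smul hT').add (hα₂'.smul hN')).add (hα₃'.smul hB₁')).add
      (hα₄'.smul hB₂')
    erw [hcomb.deriv]
    module
  -- Step B : ∂N/∂t
  intro s t
  have hdα₂ : DifferentiableAt ℝ (fun z => α₂ z t) s :=
    (pd1_hasDerivAt hα₂smooth s t).differentiableAt
  have hdα₃ : DifferentiableAt ℝ (fun z => α₃ z t) s :=
    (pd1_hasDerivAt hα₃smooth s t).differentiableAt
  have hdα₄ : DifferentiableAt ℝ (fun z => α₄ z t) s :=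
    (pd1_hasDerivAt hα₄smooth s t).differentiableAt
  have hdk₂ : DifferentiableAt ℝ (fun z => k₂ z t) s :=
    (pd1_hasDerivAt hk₂smooth s t).differentiableAt
  have hdk₃ : DifferentiableAt ℝ (fun z => k₃ z t) s :=
    (pd1_hasDerivAt hk₃smooth s t).differentiableAt
  have hdα₁ : DifferentiableAt ℝ (fun z => α₁ z t) s :=
    (pd1_hasDerivAt hα₁smooth s t).differentiableAt
  have hddα₂ : DifferentiableAt ℝ (fun z => deriv (fun x => α₂ x t) z) s :=
    (pd1_hasDerivAt (f := fun u v => deriv (fun x => α₂ x v) u)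
      (pd1_contDiff hα₂smooth) s t).differentiableAt
  have hddα₃ : DifferentiableAt ℝ (fun z => deriv (fun x => α₃ x t) z) s :=
    (pd1_hasDerivAt (f := fun u v => deriv (fun x => α₃ x v) u)
      (pd1_contDiff hα₃smooth) s t).differentiableAt
  have hddα₄ : DifferentiableAt ℝ (fun z => deriv (fun x => α₄ x t) z) s :=
    (pd1_hasDerivAt (f := fun u v => deriv (fun x => α₄ x v) u)
      (pd1_contDiff hα₄smooth) s t).differentiableAt
  -- derivatives of the three coefficient functions
  have ha : HasDerivAt
      (fun z => α₁ z t + deriv (fun x => α₂ x t) z + α₃ z t * k₃ z t)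
      (deriv (fun z => α₁ z t + deriv (fun x => α₂ x t) z + α₃ z t * k₃ z t) s) s :=
    ((hdα₁.add hddα₂).add (hdα₃.mul hdk₃)).hasDerivAt
  have hb : HasDerivAt
      (fun z => α₂ z t * k₂ z t + deriv (fun x => α₃ x t) z - α₄ z t * k₃ z t)
      (deriv (fun x => α₂ x t * k₂ x t) s + deriv (fun x => deriv (fun y => α₃ y t) x) s
        - deriv (fun x => α₄ x t * k₃ x t) s) s := by
    have h1 : HasDerivAt (fun z => α₂ z t * k₂ z t)
        (deriv (fun x => α₂ x t * k₂ x t) s) s := (hdα₂.mul hdk₂).hasDerivAt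
    have h2 : HasDerivAt (fun z => deriv (fun x => α₃ x t) z)
        (deriv (fun x => deriv (fun y => α₃ y t) x) s) s := hddα₃.hasDerivAt
    have h3 : HasDerivAt (fun z => α₄ z t * k₃ z t)
        (deriv (fun x => α₄ x t * k₃ x t) s) s := (hdα₄.mul hdk₃).hasDerivAt
    exact (h1.add h2).sub h3
  have hc : HasDerivAt
      (fun z => deriv (fun x => α₄ x t) z - α₃ z t * k₂ z t)
      (deriv (fun z => deriv (fun x => α₄ x t) z - α₃ z t * k₂ z t) s) s :=
    (hddα₄.sub (hdα₃.mul hdk₂)).hasDerivAt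
  have hN' : HasDerivAt (fun z => N z t) (k₂ s t • B₁ s t) s := by
    have := (pd1_hasDerivAt hNsmooth s t).differentiableAt.hasDerivAt
    rwa [hfr₂] at this
  have hB₁' : HasDerivAt (fun z => B₁ z t) (k₃ s t • N s t - k₂ s t • B₂ s t) s := by
    have := (pd1_hasDerivAt hB₁smooth s t).differentiableAt.hasDerivAt
    rwa [hfr₃] at this
  have hB₂' : HasDerivAt (fun z => B₂ z t) (-T s t - k₃ s t • B₁ s t) s := by
    have := (pd1_hasDerivAt hB₂smooth s t).differentiableAt.hasDerivAt
    rwa [hfr₄'] at this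
  have hcomb := ((ha.smul hN').add (hb.smul hB₁')).add (hc.smul hB₂')
  -- ∂N/∂t equals this combination's derivative
  have hNt : deriv (fun x => N s x) t =
      ((α₁ s t + deriv (fun x => α₂ x t) s + α₃ s t * k₃ s t) •
          (k₂ s t • B₁ s t) +
        (deriv (fun z => α₁ z t + deriv (fun x => α₂ x t) z + α₃ z t * k₃ z t) s) • N s t) +
      ((α₂ s t * k₂ s t + deriv (fun x => α₃ x t) s - α₄ s t * k₃ s t) •
          (k₃ s t • N s t - k₂ s t • B₂ s t) +
        (deriv (fun x => α₂ x t * k₂ x t) s + deriv (fun x => deriv (fun y => α₃ y t) x) s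
          - deriv (fun x => α₄ x t * k₃ x t) s) • B₁ s t) +
      ((deriv (fun x => α₄ x t) s - α₃ s t * k₂ s t) • (-T s t - k₃ s t • B₁ s t) +
        (deriv (fun z => deriv (fun x => α₄ x t) z - α₃ z t * k₂ z t) s) • B₂ s t) := by
    have e1 : (fun x => N s x) = fun x => deriv (fun z => T z x) s := by
      funext x; rw [hfr₁' s x]
    have e2 : (fun z => deriv (fun x => T z x) t) =
        fun z => (α₁ z t + deriv (fun x => α₂ x t) z + α₃ z t * k₃ z t) • N z t
          + (α₂ z t * k₂ z t + deriv (fun x => α₃ x t) z - α₄ z t * k₃ z t) • B₁ z t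
          + (deriv (fun x => α₄ x t) z - α₃ z t * k₂ z t) • B₂ z t := by
      funext z; exact stepA z t
    rw [e1, pd_swap hTsmooth s t, e2]; erw [hcomb.deriv]
  -- compute ψ₁
  have hB₂B₁ : mink (B₂ s t) (B₁ s t) = 0 := by rw [mink_comm]; exact hB₁B₂ s t
  have hψ : ψ₁ s t =
      (α₁ s t + deriv (fun x => α₂ x t) s + α₃ s t * k₃ s t) * k₂ s t +
      (deriv (fun x => α₂ x t * k₂ x t) s + deriv (fun x => deriv (fun y => α₃ y t) x) s
        - deriv (fun x => α₄ x t * k₃ x t) s) -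
      (deriv (fun x => α₄ x t) s - α₃ s t * k₂ s t) * k₃ s t := by
    rw [hψ₁ s t, hNt]
    simp only [mink_add_left, mink_sub_left, mink_smul_left, mink_neg_left,
      hTB₁ s t, hNB₁ s t, hB₁B₁ s t, hB₂B₁]
    ring
  rw [hψ]
  ring
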